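/- For every integer k ≥ 2 and every z ∈ ℂ∖[−1,1], (1/(2πi)) ∫_{−1}^{1} (T_k(t) − T_{k−2}(t))/(√(1−t²)·(t−z)) dt = −i·(J₊⁻¹(z))^{k−1}. -/

import Mathlib

open MeasureTheory Filter Set Polynomial

/-- The inverse Joukowsky transform mapping the slit plane to the unit disk,
`J₊⁻¹(z) = z - (z-1)^{1/2} (z+1)^{1/2}` with principal-branch square roots. -/
noncomputable def Jinv (z : ℂ) : ℂ :=
  z - (z - 1) ^ ((1 : ℂ) / 2) * (z + 1) ^ ((1 : ℂ) / 2)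

namespace CT8


lemma cSqrt_sq (ζ : ℂ) : (ζ ^ ((1:ℂ)/2)) ^ 2 = ζ := by
  rcases eq_or_ne ζ 0 with rfl | h
  · rw [Complex.zero_cpow (by norm_num)]; ring
  · rw [Complex.cpow_def_of_ne_zero h, sq, ← Complex.exp_add]
    rw [show Complex.log ζ * (1/2) + Complex.log ζ * (1/2) = Complex.log ζ by ring]
    exact Complex.exp_log h

lemma cSqrt_re_nonneg (ζ : ℂ) : 0 ≤ (ζ ^ ((1:ℂ)/2)).re := by
  rcases eq_or_ne ζ 0 with rfl | h
  · rw [Complex.zero_cpow (by norm_num)]; simp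
  · rw [Complex.cpow_def_of_ne_zero h, Complex.exp_re]
    apply mul_nonneg (Real.exp_nonneg _)
    apply Real.cos_nonneg_of_mem_Icc
    constructor
    · simp only [Complex.mul_im, Complex.log_im, Complex.log_re]
      have h1 := Complex.neg_pi_lt_arg ζ
      have : ((1:ℂ)/2).re = 1/2 := by norm_num
      have : ((1:ℂ)/2).im = 0 := by norm_num
      simp_all
      nlinarith [Real.pi_pos]
    · simp only [Complex.mul_im, Complex.log_im, Complex.log_re]
      have h1 := Complex.arg_le_pi ζ
      have : ((1:ℂ)/2).re = 1/2 := by norm_num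
      have : ((1:ℂ)/2).im = 0 := by norm_num
      simp_all
      nlinarith [Real.pi_pos]

lemma cSqrt_im_nonneg (ζ : ℂ) (h : 0 ≤ ζ.im) : 0 ≤ (ζ ^ ((1:ℂ)/2)).im := by
  rcases eq_or_ne ζ 0 with rfl | h0
  · rw [Complex.zero_cpow (by norm_num)]; simp
  · rw [Complex.cpow_def_of_ne_zero h0, Complex.exp_im]
    apply mul_nonneg (Real.exp_nonneg _)
    apply Real.sin_nonneg_of_nonneg_of_le_pi
    · simp only [Complex.mul_im, Complex.log_im, Complex.log_re]
      have h1 := Complex.arg_nonneg_iff.2 h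
      have e1 : ((1:ℂ)/2).re = 1/2 := by norm_num
      have e2 : ((1:ℂ)/2).im = 0 := by norm_num
      rw [e1, e2]
      nlinarith
    · simp only [Complex.mul_im, Complex.log_im, Complex.log_re]
      have h1 := Complex.arg_le_pi ζ
      have e1 : ((1:ℂ)/2).re = 1/2 := by norm_num
      have e2 : ((1:ℂ)/2).im = 0 := by norm_num
      rw [e1, e2]
      nlinarith [Real.pi_pos]

lemma cSqrt_im_nonpos (ζ : ℂ) (h : ζ.im < 0) : (ζ ^ ((1:ℂ)/2)).im ≤ 0 := by
  have h0 : ζ ≠ 0 := by intro h'; rw [h'] at h; simp at h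
  rw [Complex.cpow_def_of_ne_zero h0, Complex.exp_im]
  apply mul_nonpos_of_nonneg_of_nonpos (Real.exp_nonneg _)
  apply Real.sin_nonpos_of_nonpos_of_neg_pi_le
  · simp only [Complex.mul_im, Complex.log_im, Complex.log_re]
    have h1 := (Complex.arg_neg_iff.2 h).le
    have e1 : ((1:ℂ)/2).re = 1/2 := by norm_num
    have e2 : ((1:ℂ)/2).im = 0 := by norm_num
    rw [e1, e2]
    nlinarith
  · simp only [Complex.mul_im, Complex.log_im, Complex.log_re]
    have h1 := (Complex.neg_pi_lt_arg ζ).le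
    have e1 : ((1:ℂ)/2).re = 1/2 := by norm_num
    have e2 : ((1:ℂ)/2).im = 0 := by norm_num
    rw [e1, e2]
    nlinarith [Real.pi_pos]




lemma Jinv_mul (z : ℂ) : Jinv z * (z + (z - 1) ^ ((1:ℂ)/2) * (z + 1) ^ ((1:ℂ)/2)) = 1 := by
  set a := (z - 1) ^ ((1:ℂ)/2) with ha
  set b := (z + 1) ^ ((1:ℂ)/2) with hb
  have h1 : a ^ 2 = z - 1 := cSqrt_sq _
  have h2 : b ^ 2 = z + 1 := cSqrt_sq _
  unfold Jinv
  rw [← ha, ← hb]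
  linear_combination (-(b^2):ℂ) * h1 - (z - 1) * h2

lemma Jinv_ne_zero (z : ℂ) : Jinv z ≠ 0 := by
  intro h
  have := Jinv_mul z
  rw [h, zero_mul] at this
  exact zero_ne_one this

lemma Jinv_quad (z : ℂ) : (Jinv z) ^ 2 + 1 = 2 * z * Jinv z := by
  set a := (z - 1) ^ ((1:ℂ)/2) with ha
  set b := (z + 1) ^ ((1:ℂ)/2) with hb
  have h1 : a ^ 2 = z - 1 := cSqrt_sq _
  have h2 : b ^ 2 = z + 1 := cSqrt_sq _
  unfold Jinv
  rw [← ha, ← hb]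
  linear_combination (b^2:ℂ) * h1 + (z - 1) * h2

lemma abs_Jinv_le (z : ℂ) : ‖Jinv z‖ ≤ 1 := by
  set a := (z - 1) ^ ((1:ℂ)/2) with ha
  set b := (z + 1) ^ ((1:ℂ)/2) with hb
  have ha2 : a ^ 2 = z - 1 := cSqrt_sq _
  have hb2 : b ^ 2 = z + 1 := cSqrt_sq _
  have hdot : 0 ≤ a.re * b.re + a.im * b.im := by
    rcases le_or_gt 0 z.im with h | h
    · have h1 : 0 ≤ (z - 1).im := by simpa using h
      have h2 : 0 ≤ (z + 1).im := by simpa using h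
      have := cSqrt_re_nonneg (z - 1)
      have := cSqrt_re_nonneg (z + 1)
      have := cSqrt_im_nonneg (z - 1) h1
      have := cSqrt_im_nonneg (z + 1) h2
      positivity
    · have h1 : (z - 1).im < 0 := by simpa using h
      have h2 : (z + 1).im < 0 := by simpa using h
      have := cSqrt_re_nonneg (z - 1)
      have := cSqrt_re_nonneg (z + 1)
      have := cSqrt_im_nonpos (z - 1) h1
      have := cSqrt_im_nonpos (z + 1) h2
      nlinarith
  have hzm : z - a * b = (a - b) ^ 2 / 2 := by linear_combination (-(1:ℂ)/2) * ha2 - (1/2 : ℂ) * hb2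
  have hzp : z + a * b = (a + b) ^ 2 / 2 := by linear_combination (-(1:ℂ)/2) * ha2 - (1/2 : ℂ) * hb2
  have hablee : ‖a - b‖ ≤ ‖a + b‖ := by
    have h1 : Complex.normSq (a - b) ≤ Complex.normSq (a + b) := by
      simp only [Complex.normSq_apply, Complex.sub_re, Complex.sub_im, Complex.add_re,
        Complex.add_im]
      nlinarith
    have := Complex.sq_norm (a - b)
    have := Complex.sq_norm (a + b)
    nlinarith [norm_nonneg (a - b), norm_nonneg (a + b)]
  have hle : ‖z - a * b‖ ≤ ‖z + a * b‖ := by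
    rw [hzm, hzp, norm_div, norm_div, norm_pow, norm_pow]
    gcongr
  have hmul : ‖z - a * b‖ * ‖z + a * b‖ = 1 := by
    rw [← norm_mul]
    have : (z - a * b) * (z + a * b) = 1 := by
      have := Jinv_mul z
      rw [← ha, ← hb] at this
      unfold Jinv at this
      rw [← ha, ← hb] at this
      exact this
    rw [this, norm_one]
  have habs : ‖Jinv z‖ = ‖z - a * b‖ := by
    unfold Jinv; rw [← ha, ← hb]
  rw [habs]
  nlinarith [norm_nonneg (z - a*b), norm_nonneg (z + a*b)]

lemma abs_Jinv_lt (z : ℂ) (hz : z ∉ Complex.ofReal '' Set.Icc (-1 : ℝ) 1) :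
    ‖Jinv z‖ < 1 := by
  rcases lt_or_eq_of_le (abs_Jinv_le z) with h | h
  · exact h
  exfalso
  set w := Jinv z with hw
  set s := (z - 1) ^ ((1:ℂ)/2) * (z + 1) ^ ((1:ℂ)/2) with hs
  have hmul : w * (z + s) = 1 := Jinv_mul z
  have hws : w = z - s := rfl
  -- z + s = conj w
  have hconj : z + s = (starRingEnd ℂ) w := by
    have hwne : w ≠ 0 := Jinv_ne_zero z
    have h1 : z + s = w⁻¹ := by
      field_simp at hmul ⊢
      linear_combination hmul
    rw [h1, Complex.inv_def]
    rw [Complex.normSq_eq_norm_sq, h]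
    simp
  have hzre : z = ((w.re : ℝ) : ℂ) := by
    have : z = (w + (starRingEnd ℂ) w) / 2 := by
      rw [← hconj]
      rw [hws]; ring
    rw [this, Complex.add_conj]
    push_cast
    ring
  apply hz
  refine ⟨w.re, ?_, hzre.symm⟩
  constructor
  · have := Complex.abs_re_le_norm w; rw [h] at this
    cases abs_le.1 this; assumption
  · have := Complex.abs_re_le_norm w; rw [h] at this
    cases abs_le.1 this; assumption


open Complex


variable {z w : ℂ}

lemma one_sub_mul_ne (hw : ‖w‖ < 1) {u : ℂ} (hu : ‖u‖ = 1) :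
    0 < (1 - w * u).re := by
  have h1 : (w * u).re ≤ ‖w * u‖ := Complex.re_le_norm _
  rw [norm_mul, hu, mul_one] at h1
  have : (1 - w * u).re = 1 - (w * u).re := by simp
  linarith

lemma abs_exp_one (θ : ℝ) : ‖Complex.exp ((θ:ℂ) * I)‖ = 1 := by
  rw [Complex.norm_exp]; simp

lemma abs_exp_one' (θ : ℝ) : ‖Complex.exp (-((θ:ℂ) * I))‖ = 1 := by
  rw [Complex.norm_exp]; simp

lemma hasDerivAt_Phi (hw : ‖w‖ < 1) (hw0 : w ≠ 0) (hq : w^2 + 1 = 2*z*w) (θ : ℝ) :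
    HasDerivAt (fun θ : ℝ => (-2*w/(1-w^2)) *
        ((θ:ℂ) + I * (Complex.log (1 - w * Complex.exp ((θ:ℂ) * I))
          - Complex.log (1 - w * Complex.exp (-((θ:ℂ) * I))))))
      (((Real.cos θ : ℂ) - z)⁻¹) θ := by
  set e₁ := Complex.exp ((θ:ℂ) * I) with he₁
  set e₂ := Complex.exp (-((θ:ℂ) * I)) with he₂
  have hee : e₁ * e₂ = 1 := by rw [he₁, he₂, ← Complex.exp_add]; simp
  have hA1 : (1 : ℂ) - w * e₁ ≠ 0 := by
    have := one_sub_mul_ne hw (abs_exp_one θ)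
    intro h; rw [h] at this; simp at this
  have hA2 : (1 : ℂ) - w * e₂ ≠ 0 := by
    have := one_sub_mul_ne hw (abs_exp_one' θ)
    intro h; rw [h] at this; simp at this
  have h1w2 : (1 : ℂ) - w^2 ≠ 0 := by
    intro h
    have h' : w^2 = 1 := by linear_combination -h
    have : ‖w‖ ^ 2 = 1 := by rw [← norm_pow, h', norm_one]
    nlinarith [norm_nonneg w]
  have hcos : (Real.cos θ : ℂ) = (e₁ + e₂) / 2 := by
    rw [he₁, he₂, Complex.ofReal_cos, Complex.cos]
    ring_nf
  have hAA : (1 - w * e₁) * (1 - w * e₂) = 2 * w * (z - (Real.cos θ : ℂ)) := by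
    rw [hcos]
    linear_combination w^2 * hee + hq
  have hcz : (Real.cos θ : ℂ) - z ≠ 0 := by
    intro h
    have h2 : (1 - w * e₁) * (1 - w * e₂) = 0 := by
      rw [hAA]
      have : z - (Real.cos θ : ℂ) = 0 := by linear_combination -h
      rw [this]; ring
    rcases mul_eq_zero.1 h2 with h3 | h3
    exacts [hA1 h3, hA2 h3]
  -- derivative of exp(θ I)
  have hde₁ : HasDerivAt (fun θ : ℝ => Complex.exp ((θ:ℂ) * I)) (e₁ * I) θ := by
    have h0 : HasDerivAt (fun y : ℂ => Complex.exp (y * I)) (e₁ * I) (θ:ℂ) := by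
      simpa [he₁] using ((hasDerivAt_id ((θ:ℂ))).mul_const I).cexp
    exact h0.comp_ofReal
  have hde₂ : HasDerivAt (fun θ : ℝ => Complex.exp (-((θ:ℂ) * I))) (-(e₂ * I)) θ := by
    have h0 : HasDerivAt (fun y : ℂ => Complex.exp (-(y * I))) (-(e₂ * I)) (θ:ℂ) := by
      simpa [he₂, mul_comm] using (((hasDerivAt_id ((θ:ℂ))).mul_const I).neg).cexp
    exact h0.comp_ofReal
  have hmem1 : (1 : ℂ) - w * e₁ ∈ Complex.slitPlane :=
    Or.inl (one_sub_mul_ne hw (abs_exp_one θ))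
  have hmem2 : (1 : ℂ) - w * e₂ ∈ Complex.slitPlane :=
    Or.inl (one_sub_mul_ne hw (abs_exp_one' θ))
  have hlog1 : HasDerivAt (fun θ : ℝ => Complex.log (1 - w * Complex.exp ((θ:ℂ) * I)))
      (-(w * (e₁ * I)) / (1 - w * e₁)) θ :=
    HasDerivAt.clog_real ((hde₁.const_mul w).const_sub 1) hmem1
  have hlog2 : HasDerivAt (fun θ : ℝ => Complex.log (1 - w * Complex.exp (-((θ:ℂ) * I))))
      (-(w * -(e₂ * I)) / (1 - w * e₂)) θ :=
    HasDerivAt.clog_real ((hde₂.const_mul w).const_sub 1) hmem2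
  have hid : HasDerivAt (fun θ : ℝ => (θ:ℂ)) 1 θ := by
    simpa using (hasDerivAt_id θ).ofReal_comp
  have hΦ := (hid.add ((hlog1.sub hlog2).const_mul I)).const_mul (-2*w/(1-w^2))
  refine hΦ.congr_deriv (Eq.symm ?_)
  rw [eq_comm]
  apply eq_inv_of_mul_eq_one_left
  have hnum1 : I * (-(w * (e₁ * I))) = w * e₁ := by
    linear_combination (-(w * e₁)) * Complex.I_sq
  have hnum2 : I * (-(w * -(e₂ * I))) = -(w * e₂) := by
    linear_combination (w * e₂) * Complex.I_sq
  have hstep : (1:ℂ) + I * (-(w * (e₁ * I)) / (1 - w * e₁) - -(w * -(e₂ * I)) / (1 - w * e₂))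
      = (1 - w^2) / ((1 - w * e₁) * (1 - w * e₂)) := by
    rw [mul_sub, mul_div_assoc', mul_div_assoc', hnum1, hnum2]
    field_simp
    linear_combination (-(w^2)) * hee
  calc (-2*w/(1-w^2)) * (1 + I * (-(w * (e₁ * I)) / (1 - w * e₁) - -(w * -(e₂ * I)) / (1 - w * e₂)))
        * ((Real.cos θ : ℂ) - z)
      = (-2*w/(1-w^2)) * ((1 - w^2) / ((1 - w * e₁) * (1 - w * e₂))) * ((Real.cos θ : ℂ) - z) := by
        rw [hstep]
    _ = 1 := by
        rw [hAA]
        have hcz' : z - (Real.cos θ : ℂ) ≠ 0 := fun h => hcz (by linear_combination -h)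
        rw [show (Real.cos θ : ℂ) - z = -(z - (Real.cos θ : ℂ)) by ring]
        generalize hX : z - (Real.cos θ : ℂ) = X at hcz' ⊢
        field_simp


lemma cos_sub_ne {z w : ℂ} (hw : ‖w‖ < 1) (hw0 : w ≠ 0) (hq : w^2 + 1 = 2*z*w)
    (θ : ℝ) : (Real.cos θ : ℂ) - z ≠ 0 := by
  set e₁ := Complex.exp ((θ:ℂ) * I) with he₁
  set e₂ := Complex.exp (-((θ:ℂ) * I)) with he₂
  have hee : e₁ * e₂ = 1 := by rw [he₁, he₂, ← Complex.exp_add]; simp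
  have hA1 : (1 : ℂ) - w * e₁ ≠ 0 := by
    have := one_sub_mul_ne hw (abs_exp_one θ)
    intro h; rw [h] at this; simp at this
  have hA2 : (1 : ℂ) - w * e₂ ≠ 0 := by
    have := one_sub_mul_ne hw (abs_exp_one' θ)
    intro h; rw [h] at this; simp at this
  have hcos : (Real.cos θ : ℂ) = (e₁ + e₂) / 2 := by
    rw [he₁, he₂, Complex.ofReal_cos, Complex.cos]
    ring_nf
  have hAA : (1 - w * e₁) * (1 - w * e₂) = 2 * w * (z - (Real.cos θ : ℂ)) := by
    rw [hcos]
    linear_combination w^2 * hee + hq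
  intro h
  have h2 : (1 - w * e₁) * (1 - w * e₂) = 0 := by
    rw [hAA]
    have : z - (Real.cos θ : ℂ) = 0 := by linear_combination -h
    rw [this]; ring
  rcases mul_eq_zero.1 h2 with h3 | h3
  exacts [hA1 h3, hA2 h3]

lemma continuous_inv_cos_sub {z w : ℂ} (hw : ‖w‖ < 1) (hw0 : w ≠ 0)
    (hq : w^2 + 1 = 2*z*w) :
    Continuous fun θ : ℝ => ((Real.cos θ : ℂ) - z)⁻¹ := by
  apply Continuous.inv₀
  · exact (Complex.continuous_ofReal.comp Real.continuous_cos).sub continuous_const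
  · exact cos_sub_ne hw hw0 hq

lemma integral_inv_cos_sub {z w : ℂ} (hw : ‖w‖ < 1) (hw0 : w ≠ 0)
    (hq : w^2 + 1 = 2*z*w) :
    ∫ θ in (0:ℝ)..Real.pi, ((Real.cos θ : ℂ) - z)⁻¹ = -2*Real.pi*w/(1-w^2) := by
  rw [intervalIntegral.integral_eq_sub_of_hasDerivAt
    (fun θ _ => hasDerivAt_Phi hw hw0 hq θ)
    (((continuous_inv_cos_sub hw hw0 hq)).intervalIntegrable _ _)]
  have h1 : Complex.exp ((Real.pi : ℂ) * I) = -1 := Complex.exp_pi_mul_I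
  have h2 : Complex.exp (-((Real.pi : ℂ) * I)) = -1 := by
    rw [Complex.exp_neg, h1]; norm_num
  rw [h1, h2]
  push_cast
  simp
  ring




lemma one_sub_sq_ne {w : ℂ} (hw : ‖w‖ < 1) : (1:ℂ) - w^2 ≠ 0 := by
  intro h
  have h' : w^2 = 1 := by linear_combination -h
  have : ‖w‖ ^ 2 = 1 := by rw [← norm_pow, h', norm_one]
  nlinarith [norm_nonneg w]

lemma integral_cos_nat (n : ℕ) (hn : 1 ≤ n) :
    ∫ θ in (0:ℝ)..Real.pi, Real.cos ((n:ℝ)*θ) = 0 := by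
  have hc : (n:ℝ) ≠ 0 := by positivity
  rw [intervalIntegral.integral_comp_mul_left (fun x => Real.cos x) hc]
  simp [Real.sin_nat_mul_pi]

lemma E_zero (j : ℕ) : ∫ θ in (0:ℝ)..Real.pi, Real.sin (((j:ℝ)+2)*θ) * Real.sin θ = 0 := by
  have hptw : ∀ θ:ℝ, Real.sin (((j:ℝ)+2)*θ) * Real.sin θ
      = (Real.cos (((j:ℝ)+1)*θ) - Real.cos (((j:ℝ)+3)*θ))/2 := by
    intro θ
    rw [show ((j:ℝ)+1)*θ = ((j:ℝ)+2)*θ - θ by ring,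
      show ((j:ℝ)+3)*θ = ((j:ℝ)+2)*θ + θ by ring, Real.cos_sub, Real.cos_add]
    ring
  simp_rw [hptw]
  rw [intervalIntegral.integral_div]
  rw [intervalIntegral.integral_sub]
  · have h1 : ((j:ℝ)+1) = ((j+1 : ℕ) : ℝ) := by push_cast; ring
    have h3 : ((j:ℝ)+3) = ((j+3 : ℕ) : ℝ) := by push_cast; ring
    rw [h1, h3, integral_cos_nat _ (by omega), integral_cos_nat _ (by omega)]
    norm_num
  · apply Continuous.intervalIntegrable; fun_prop
  · apply Continuous.intervalIntegrable; fun_prop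

lemma E_one : ∫ θ in (0:ℝ)..Real.pi, Real.sin θ * Real.sin θ = Real.pi / 2 := by
  simp_rw [← sq]
  rw [integral_sin_sq]
  simp

lemma A_base {z w : ℂ} (hw : ‖w‖ < 1) (hw0 : w ≠ 0) (hq : w^2 + 1 = 2*z*w) :
    ∫ θ in (0:ℝ)..Real.pi, ((Real.sin (1*θ) * Real.sin θ : ℝ) : ℂ) / ((Real.cos θ:ℂ) - z)
      = -Real.pi * w := by
  have hzc : ∀ θ : ℝ, ((Real.cos θ : ℂ) - z) ≠ 0 := cos_sub_ne hw hw0 hq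
  have h1w2 := one_sub_sq_ne hw
  have hdec : ∀ θ:ℝ, ((Real.sin (1*θ) * Real.sin θ : ℝ) : ℂ) / ((Real.cos θ:ℂ) - z)
      = -((Real.cos θ:ℂ) + z) + (1 - z^2) * ((Real.cos θ:ℂ) - z)⁻¹ := by
    intro θ
    have hne : (Complex.cos (θ:ℂ) - z) ≠ 0 := by rw [← Complex.ofReal_cos]; exact hzc θ
    have hr : Real.sin (1*θ) * Real.sin θ = 1 - Real.cos θ^2 := by
      rw [one_mul]; nlinarith [Real.sin_sq_add_cos_sq θ]
    rw [hr]
    push_cast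
    rw [div_eq_iff hne, add_mul, mul_assoc, inv_mul_cancel₀ hne, mul_one]
    ring
  simp_rw [hdec]
  rw [intervalIntegral.integral_add, intervalIntegral.integral_neg,
    intervalIntegral.integral_add, intervalIntegral.integral_const_mul,
    integral_inv_cos_sub hw hw0 hq]
  · have hcos0 : ∫ θ in (0:ℝ)..Real.pi, ((Real.cos θ : ℝ):ℂ) = 0 := by
      rw [intervalIntegral.integral_ofReal, integral_cos]
      simp
    rw [hcos0, intervalIntegral.integral_const]
    rw [zero_add, sub_zero]
    field_simp
    push_cast [Complex.real_smul]
    linear_combination (-(Real.pi:ℂ)*(w+z)) * hq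
  · apply Continuous.intervalIntegrable; fun_prop
  · apply Continuous.intervalIntegrable; exact continuous_const
  · apply Continuous.intervalIntegrable
    exact ((Complex.continuous_ofReal.comp Real.continuous_cos).add continuous_const).neg
  · apply Continuous.intervalIntegrable
    exact continuous_const.mul (continuous_inv_cos_sub hw hw0 hq)

lemma A_val {z w : ℂ} (hw : ‖w‖ < 1) (hw0 : w ≠ 0) (hq : w^2 + 1 = 2*z*w) :
    ∀ m : ℕ,
    ∫ θ in (0:ℝ)..Real.pi, ((Real.sin (((m:ℝ)+1)*θ) * Real.sin θ : ℝ) : ℂ) / ((Real.cos θ:ℂ) - z)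
      = -Real.pi * w^(m+1) := by
  have hzc : ∀ θ : ℝ, ((Real.cos θ : ℂ) - z) ≠ 0 := cos_sub_ne hw hw0 hq
  have hrec : ∀ (m:ℕ) (θ:ℝ),
      ((Real.sin (((m:ℝ)+2)*θ) * Real.sin θ : ℝ) : ℂ) / ((Real.cos θ:ℂ) - z)
      = 2*((Real.sin (((m:ℝ)+1)*θ) * Real.sin θ : ℝ) : ℂ)
        + 2*z*(((Real.sin (((m:ℝ)+1)*θ) * Real.sin θ : ℝ) : ℂ) / ((Real.cos θ:ℂ) - z))
        - ((Real.sin ((m:ℝ)*θ) * Real.sin θ : ℝ) : ℂ) / ((Real.cos θ:ℂ) - z) := by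
    intro m θ
    have hne : (Complex.cos (θ:ℂ) - z) ≠ 0 := by rw [← Complex.ofReal_cos]; exact hzc θ
    have hs : Real.sin (((m:ℝ)+2)*θ)
        = 2 * Real.cos θ * Real.sin (((m:ℝ)+1)*θ) - Real.sin ((m:ℝ)*θ) := by
      rw [show ((m:ℝ)+2)*θ = ((m:ℝ)+1)*θ + θ by ring,
        show (m:ℝ)*θ = ((m:ℝ)+1)*θ - θ by ring, Real.sin_add, Real.sin_sub]
      ring
    rw [hs]
    push_cast
    field_simp [hne]
    ring
  have hintrec : ∀ m : ℕ,
      (∫ θ in (0:ℝ)..Real.pi,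
          ((Real.sin (((m:ℝ)+2)*θ) * Real.sin θ : ℝ) : ℂ) / ((Real.cos θ:ℂ) - z))
      = 2 * ((∫ θ in (0:ℝ)..Real.pi, Real.sin (((m:ℝ)+1)*θ) * Real.sin θ : ℝ) : ℂ)
        + 2*z*(∫ θ in (0:ℝ)..Real.pi,
            ((Real.sin (((m:ℝ)+1)*θ) * Real.sin θ : ℝ) : ℂ) / ((Real.cos θ:ℂ) - z))
        - ∫ θ in (0:ℝ)..Real.pi,
            ((Real.sin ((m:ℝ)*θ) * Real.sin θ : ℝ) : ℂ) / ((Real.cos θ:ℂ) - z) := by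
    intro m
    simp_rw [hrec m]
    rw [intervalIntegral.integral_sub, intervalIntegral.integral_add,
      intervalIntegral.integral_const_mul, intervalIntegral.integral_const_mul,
      intervalIntegral.integral_ofReal]
    · apply Continuous.intervalIntegrable
      exact continuous_const.mul (by fun_prop)
    · apply Continuous.intervalIntegrable
      exact continuous_const.mul (Continuous.div (by fun_prop) (by fun_prop) hzc)
    · apply Continuous.intervalIntegrable
      apply Continuous.add
      · exact continuous_const.mul (by fun_prop)
      · exact continuous_const.mul (Continuous.div (by fun_prop) (by fun_prop) hzc)
    · apply Continuous.intervalIntegrable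
      exact Continuous.div (by fun_prop) (by fun_prop) hzc
  intro m
  induction m using Nat.strong_induction_on with
  | _ m ih =>
    match m, ih with
    | 0, _ =>
      simp only [Nat.cast_zero, zero_add, pow_one]
      exact A_base hw hw0 hq
    | (n+1), ih =>
      have hc : ((n+1:ℕ):ℝ) + 1 = (n:ℝ) + 2 := by push_cast; ring
      simp only [hc]
      rw [hintrec n, ih n (by omega)]
      rcases n with _ | p
      · have hE0 : ((0:ℕ):ℝ) + 1 = 1 := by norm_num
        simp only [hE0, one_mul]
        rw [E_one]
        simp only [Nat.cast_zero, zero_mul, Real.sin_zero, Complex.ofReal_zero, zero_div,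
          intervalIntegral.integral_zero]
        push_cast
        linear_combination (Real.pi:ℂ) * hq
      · have hE : ((p+1:ℕ):ℝ) + 1 = (p:ℝ) + 2 := by push_cast; ring
        simp only [hE]
        rw [E_zero p]
        have hc2 : ((p+1:ℕ):ℝ) = (p:ℝ) + 1 := by push_cast; ring
        simp only [hc2]
        rw [ih p (by omega)]
        push_cast
        linear_combination (Real.pi:ℂ) * w^(p+1) * hq


end CT8

/-- Cauchy transform of modified weighted Chebyshev polynomials:
`𝒞[(T_k - T_{k-2})/√(1-t²)](z) = -i·J₊⁻¹(z)^{k-1}` for `k ≥ 2`, `z ∈ ℂ∖[-1,1]`. -/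
theorem cauchy_transform_modified_chebyshevT (k : ℕ) (hk : 2 ≤ k) (z : ℂ)
    (hz : z ∉ Complex.ofReal '' Set.Icc (-1 : ℝ) 1) :
    (1 / (2 * (Real.pi : ℂ) * Complex.I)) *
        ∫ t in (-1 : ℝ)..1,
          ((Polynomial.Chebyshev.T ℂ k).eval (t : ℂ)
              - (Polynomial.Chebyshev.T ℂ ((k : ℤ) - 2)).eval (t : ℂ))
            / ((Real.sqrt (1 - t ^ 2) : ℂ) * ((t : ℂ) - z))
      = -Complex.I * (Jinv z) ^ (k - 1) := by
  obtain ⟨n, rfl⟩ : ∃ n, k = n + 2 := ⟨k - 2, by omega⟩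
  have hw : ‖Jinv z‖ < 1 := CT8.abs_Jinv_lt z hz
  have hw0 : Jinv z ≠ 0 := CT8.Jinv_ne_zero z
  have hq : (Jinv z) ^ 2 + 1 = 2 * z * Jinv z := CT8.Jinv_quad z
  have htz : ∀ t : ℝ, t ∈ Icc (-1:ℝ) 1 → (t:ℂ) - z ≠ 0 := by
    intro t ht h
    exact hz ⟨t, ht, by linear_combination h⟩
  set h : ℝ → ℂ := fun t => -2 * ((Real.sin (((n:ℝ)+1) * Real.arccos t) : ℝ) : ℂ) / ((t:ℂ) - z)
    with hh
  -- Step 1: the integrand agrees with h on [-1,1]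
  have hEq1 : Set.EqOn (fun t : ℝ =>
      ((Polynomial.Chebyshev.T ℂ ((n+2:ℕ))).eval ((t:ℝ) : ℂ)
          - (Polynomial.Chebyshev.T ℂ (((n+2:ℕ) : ℤ) - 2)).eval ((t:ℝ) : ℂ))
        / ((Real.sqrt (1 - t ^ 2) : ℂ) * ((t : ℂ) - z))) h (uIcc (-1:ℝ) 1) := by
    intro t ht
    rw [uIcc_of_le (by norm_num : (-1:ℝ) ≤ 1)] at ht
    obtain ⟨ht1, ht2⟩ := ht
    set θR := Real.arccos t with hθR
    have hcosθ : Real.cos θR = t := Real.cos_arccos ht1 ht2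
    have hsinθ : Real.sin θR = Real.sqrt (1 - t^2) := Real.sin_arccos t
    have hT : (Polynomial.Chebyshev.T ℂ ((n+2:ℕ))).eval ((t:ℝ) : ℂ)
        - (Polynomial.Chebyshev.T ℂ (((n+2:ℕ) : ℤ) - 2)).eval ((t:ℝ) : ℂ)
        = -2 * ((Real.sin (((n:ℝ)+1) * θR) : ℝ) : ℂ) * ((Real.sin θR : ℝ) : ℂ) := by
      have h1 : ((t:ℝ):ℂ) = Complex.cos ((θR : ℝ) : ℂ) := by
        rw [← hcosθ, Complex.ofReal_cos]
      rw [h1, Polynomial.Chebyshev.T_complex_cos, Polynomial.Chebyshev.T_complex_cos,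
        Complex.cos_sub_cos]
      have e1 : ((((n+2:ℕ):ℤ):ℂ) * ((θR:ℝ):ℂ) + (((((n+2:ℕ):ℤ)-2):ℤ):ℂ) * ((θR:ℝ):ℂ)) / 2
          = ((((n:ℝ)+1) * θR : ℝ) : ℂ) := by push_cast; ring
      have e2 : ((((n+2:ℕ):ℤ):ℂ) * ((θR:ℝ):ℂ) - (((((n+2:ℕ):ℤ)-2):ℤ):ℂ) * ((θR:ℝ):ℂ)) / 2
          = ((θR:ℝ):ℂ) := by push_cast; ring
      rw [e1, e2, Complex.ofReal_sin, Complex.ofReal_sin]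
    simp only [hh]
    rcases eq_or_ne (Real.sqrt (1 - t^2)) 0 with hS | hS
    · have hθ0π : θR = 0 ∨ θR = Real.pi := by
        have h0 := Real.arccos_nonneg t
        have hπ := Real.arccos_le_pi t
        rcases eq_or_lt_of_le h0 with h' | h'
        · exact Or.inl h'.symm
        rcases eq_or_lt_of_le hπ with h'' | h''
        · exact Or.inr h''
        exfalso
        have := Real.sin_pos_of_pos_of_lt_pi h' h''
        rw [hsinθ, hS] at this
        exact lt_irrefl 0 this
      have hsin1 : Real.sin (((n:ℝ)+1) * θR) = 0 := by
        rcases hθ0π with h' | h'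
        · rw [h']; simp
        · rw [h']
          have : ((n:ℝ)+1) * Real.pi = ((n+1:ℕ):ℝ) * Real.pi := by push_cast; ring
          rw [this, Real.sin_nat_mul_pi]
      simp only [hT, ← hθR, hsin1, hS]
      simp
    · rw [hT, ← hsinθ]
      have hSne : ((Real.sin θR : ℝ) : ℂ) ≠ 0 := by
        rw [hsinθ]
        exact_mod_cast Complex.ofReal_ne_zero.mpr hS
      rw [show (-2 * ((Real.sin (((n:ℝ)+1) * θR) : ℝ) : ℂ) * ((Real.sin θR : ℝ) : ℂ))
          = ((Real.sin θR : ℝ) : ℂ) * (-2 * ((Real.sin (((n:ℝ)+1) * θR) : ℝ) : ℂ)) by ring,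
        show (((Real.sin θR : ℝ) : ℂ) * ((t:ℂ) - z))
          = ((Real.sin θR : ℝ) : ℂ) * ((t:ℂ) - z) from rfl,
        mul_div_mul_left _ _ hSne]
  rw [intervalIntegral.integral_congr hEq1]
  -- Step 2: substitution t = cos θ
  have himg : Real.cos '' uIcc (0:ℝ) Real.pi ⊆ Icc (-1:ℝ) 1 := by
    rintro x ⟨θ, _, rfl⟩
    exact ⟨Real.neg_one_le_cos θ, Real.cos_le_one θ⟩
  have hcont : ContinuousOn h (Real.cos '' uIcc (0:ℝ) Real.pi) := by
    apply ContinuousOn.mono _ himg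
    apply ContinuousOn.div
    · apply Continuous.continuousOn
      exact continuous_const.mul (Complex.continuous_ofReal.comp
        (Real.continuous_sin.comp (continuous_const.mul Real.continuous_arccos)))
    · exact (Complex.continuous_ofReal.sub continuous_const).continuousOn
    · exact htz
  have hsub : (∫ t in (-1:ℝ)..1, h t) = ∫ θ in (0:ℝ)..Real.pi, (Real.sin θ) • h (Real.cos θ) := by
    have := intervalIntegral.integral_comp_smul_deriv'
      (f := Real.cos) (f' := fun θ => -Real.sin θ) (g := h) (a := (0:ℝ)) (b := Real.pi)
      (fun x _ => Real.hasDerivAt_cos x) (Real.continuous_sin.neg.continuousOn) hcont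
    rw [Real.cos_zero, Real.cos_pi, intervalIntegral.integral_symm (-1:ℝ) 1] at this
    rw [show (∫ t in (-1:ℝ)..1, h t)
        = -(∫ x in (0:ℝ)..Real.pi, (fun θ => -Real.sin θ) x • (h ∘ Real.cos) x) by
      rw [this, neg_neg], ← intervalIntegral.integral_neg]
    apply intervalIntegral.integral_congr
    intro θ _
    simp [neg_smul]
  rw [hsub]
  -- Step 3: identify with the A integrand
  have hEq2 : Set.EqOn (fun θ : ℝ => (Real.sin θ) • h (Real.cos θ))
      (fun θ : ℝ => (-2 : ℂ) *
        (((Real.sin (((n:ℝ)+1)*θ) * Real.sin θ : ℝ) : ℂ) / ((Real.cos θ:ℂ) - z)))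
      (uIcc (0:ℝ) Real.pi) := by
    intro θ hθ
    rw [uIcc_of_le Real.pi_pos.le] at hθ
    obtain ⟨hθ1, hθ2⟩ := hθ
    simp only [hh, Real.arccos_cos hθ1 hθ2]
    rw [Complex.real_smul]
    push_cast
    ring
  rw [intervalIntegral.integral_congr hEq2, intervalIntegral.integral_const_mul,
    CT8.A_val hw hw0 hq n]
  -- Step 4: final algebra
  have hπ : ((Real.pi : ℝ) : ℂ) ≠ 0 := by simpa using Real.pi_ne_zero
  have hk1 : n + 2 - 1 = n + 1 := by omega
  rw [hk1]
  field_simp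
  linear_combination (1:ℂ) * Complex.I_sq
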